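/- arXiv:1406.1236 — 3 statements merged into one kernel-verified Lean document; each statement's English description precedes it below -/
import Mathlib

section
/- Let R be a ring. An element a ∈ R is feckly clean if and only if there exists e ∈ R with eR(1-e) ⊆ J(R) such that every maximal ideal containing a-1 contains e, and no maximal ideal containing a contains e. -/
def IsMaxTwoSided {R : Type*} [Ring R] (P : TwoSidedIdeal R) : Prop :=
  P ≠ ⊤ ∧ ∀ Q : TwoSidedIdeal R, P < Q → Q = ⊤

def InJac {R : Type*} [Ring R] (x : R) : Prop := x ∈ Ideal.jacobson (⊥ : Ideal R)

def IsFullElem {R : Type*} [Ring R] (u : R) : Prop := TwoSidedIdeal.span ({u} : Set R) = ⊤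

def FecklyCleanElem {R : Type*} [Ring R] (a : R) : Prop :=
  ∃ e u : R, a = e + u ∧ IsFullElem u ∧ ∀ r : R, InJac (e * r * (1 - e))

def FecklyCleanRing (R : Type*) [Ring R] : Prop := ∀ a : R, FecklyCleanElem a

section Aux

variable {R : Type*} [Ring R]

lemma TSI.eq_top_of_one_mem {P : TwoSidedIdeal R} (h : (1 : R) ∈ P) : P = ⊤ := by
  refine le_antisymm le_top fun x _ => ?_
  simpa using P.mul_mem_left x 1 h

lemma TSI.one_not_mem {P : TwoSidedIdeal R} (h : P ≠ ⊤) : (1 : R) ∉ P :=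
  fun h1 => h (TSI.eq_top_of_one_mem h1)

lemma TSI.span_le {s : Set R} {P : TwoSidedIdeal R} (h : s ⊆ P) :
    TwoSidedIdeal.span s ≤ P := fun _ hx => TwoSidedIdeal.mem_span_iff.mp hx P h

/-- Existence of maximal two-sided ideals above a proper two-sided ideal (Zorn). -/
lemma TSI.exists_le_maximal (I : TwoSidedIdeal R) (hI : (1 : R) ∉ I) :
    ∃ P : TwoSidedIdeal R, IsMaxTwoSided P ∧ I ≤ P := by
  obtain ⟨M, hIM, hM⟩ := zorn_le_nonempty₀
    {Q : TwoSidedIdeal R | (1 : R) ∉ Q}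
    (fun c hc hchain y hyc => by
      refine ⟨TwoSidedIdeal.mk' (⋃ Q ∈ c, (Q : Set R)) ?_ ?_ ?_ ?_ ?_, ?_, ?_⟩
      · exact Set.mem_biUnion hyc (TwoSidedIdeal.zero_mem y)
      · rintro x z hx hz
        obtain ⟨Q1, hQ1, hx⟩ := Set.mem_iUnion₂.mp hx
        obtain ⟨Q2, hQ2, hz⟩ := Set.mem_iUnion₂.mp hz
        rcases hchain.total hQ1 hQ2 with h | h
        · exact Set.mem_biUnion hQ2 (Q2.add_mem (h hx) hz)
        · exact Set.mem_biUnion hQ1 (Q1.add_mem hx (h hz))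
      · rintro x hx
        obtain ⟨Q, hQ, hx⟩ := Set.mem_iUnion₂.mp hx
        exact Set.mem_biUnion hQ (Q.neg_mem hx)
      · rintro x z hz
        obtain ⟨Q, hQ, hz⟩ := Set.mem_iUnion₂.mp hz
        exact Set.mem_biUnion hQ (Q.mul_mem_left x z hz)
      · rintro x z hx
        obtain ⟨Q, hQ, hx⟩ := Set.mem_iUnion₂.mp hx
        exact Set.mem_biUnion hQ (Q.mul_mem_right x z hx)
      · intro h1
        rw [TwoSidedIdeal.mem_mk'] at h1
        obtain ⟨Q, hQ, h1⟩ := Set.mem_iUnion₂.mp h1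
        exact hc hQ h1
      · intro Q hQ x hx
        rw [TwoSidedIdeal.mem_mk']
        exact Set.mem_biUnion hQ hx)
    I hI
  refine ⟨M, ⟨fun h => hM.prop (h ▸ TwoSidedIdeal.mem_top _), fun Q hQ => ?_⟩, hIM⟩
  by_contra hQtop
  exact absurd (hM.eq_of_le (TSI.one_not_mem hQtop) hQ.le) (ne_of_lt hQ)

/-- The Jacobson radical (as a left-ideal radical) is contained in every maximal
two-sided ideal. -/
lemma TSI.jac_le_max {P : TwoSidedIdeal R} (hP : IsMaxTwoSided P) {x : R} (hx : InJac x) :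
    x ∈ P := by
  by_contra hxP
  set Jhat : TwoSidedIdeal R := TwoSidedIdeal.jacobson ⊥ with hJhat
  have hxJ : x ∈ Jhat := by
    have : TwoSidedIdeal.asIdeal (Jhat) = (TwoSidedIdeal.asIdeal (⊥ : TwoSidedIdeal R)).jacobson :=
      TwoSidedIdeal.asIdeal_jacobson ⊥
    have hbot : TwoSidedIdeal.asIdeal (⊥ : TwoSidedIdeal R) = (⊥ : Ideal R) := by
      ext y; simp
    rw [← TwoSidedIdeal.mem_asIdeal, this, hbot]
    exact hx
  -- P ⊔ span{x} = ⊤ by maximality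
  have htop : P ⊔ TwoSidedIdeal.span {x} = ⊤ := by
    refine hP.2 _ (lt_of_le_of_ne le_sup_left ?_)
    intro h
    exact hxP (h ▸ TwoSidedIdeal.mem_sup_right (TwoSidedIdeal.subset_span (Set.mem_singleton x)))
  have hspan : TwoSidedIdeal.span {x} ≤ Jhat :=
    TSI.span_le (by simpa using hxJ)
  have h1 : (1 : R) ∈ P ⊔ Jhat :=
    (sup_le_sup_left hspan P) (htop ▸ TwoSidedIdeal.mem_top _)
  obtain ⟨p, hp, j, hj, hpj⟩ := TwoSidedIdeal.mem_sup.mp h1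
  have hj' : j ∈ Ideal.jacobson (⊥ : Ideal R) := by
    have hbot : TwoSidedIdeal.asIdeal (⊥ : TwoSidedIdeal R) = (⊥ : Ideal R) := by ext y; simp
    rw [← hbot, ← TwoSidedIdeal.asIdeal_jacobson]
    simpa using hj
  obtain ⟨z, hz⟩ := Ideal.mem_jacobson_iff.mp hj' (-1)
  rw [Ideal.mem_bot, sub_eq_zero] at hz
  have hzp : z * p = 1 := by
    rw [← hz, show p = 1 - j by rw [← hpj]; noncomm_ring]
    noncomm_ring
  have : (1 : R) ∈ P := hzp ▸ P.mul_mem_left z p hp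
  exact hP.1 (TSI.eq_top_of_one_mem this)

/-- Elements of the span of `{u}`, sandwiched between `c` and `d`, land in `P` provided
all basic sandwiches do. -/
lemma TSI.sandwich_span {P : TwoSidedIdeal R} {u c d : R}
    (h : ∀ x y : R, c * (x * u * y) * d ∈ P) :
    ∀ z ∈ TwoSidedIdeal.span ({u} : Set R), c * z * d ∈ P := by
  intro z hz
  rw [TwoSidedIdeal.mem_span_iff_mem_addSubgroup_closure] at hz
  induction hz using AddSubgroup.closure_induction with
  | mem w hw =>
    obtain ⟨v, ⟨x, -, u', hu', rfl⟩, y, -, rfl⟩ := hw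
    rw [Set.mem_singleton_iff] at hu'
    subst hu'
    exact h x y
  | zero => simpa using P.zero_mem
  | add w₁ w₂ _ _ h1 h2 =>
    have : c * (w₁ + w₂) * d = c * w₁ * d + c * w₂ * d := by noncomm_ring
    rw [this]; exact P.add_mem h1 h2
  | neg w _ h1 =>
    have : c * (-w) * d = -(c * w * d) := by noncomm_ring
    rw [this]; exact P.neg_mem h1

end Aux

theorem stmt4 {R : Type*} [Ring R] (a : R) :
    FecklyCleanElem a ↔ ∃ e : R, (∀ r : R, InJac (e * r * (1 - e))) ∧
      (∀ P : TwoSidedIdeal R, IsMaxTwoSided P → a - 1 ∈ P → e ∈ P) ∧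
      (∀ P : TwoSidedIdeal R, IsMaxTwoSided P → a ∈ P → e ∉ P) := by
  constructor
  · rintro ⟨e, u, rfl, hu, hJ⟩
    refine ⟨e, hJ, ?_, ?_⟩
    · intro P hP ha1
      -- e * (x * u * y) ∈ P for all x y
      have key : ∀ x y : R, e * (x * u * y) * 1 ∈ P := by
        intro x y
        have h1 : u - (1 - e) ∈ P := by
          have : u - (1 - e) = (e + u) - 1 := by noncomm_ring
          rw [this]; exact ha1
        have h2 : e * x * (1 - e) ∈ P := TSI.jac_le_max hP (hJ x)
        have heq : e * (x * u * y) * 1 =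
            (e * x) * (u - (1 - e)) * y + (e * x * (1 - e)) * y := by noncomm_ring
        rw [heq]
        exact P.add_mem (P.mul_mem_right _ _ (P.mul_mem_left _ _ h1))
          (P.mul_mem_right _ _ h2)
      have h1span : (1 : R) ∈ TwoSidedIdeal.span ({u} : Set R) := by
        rw [hu]; exact TwoSidedIdeal.mem_top _
      have := TSI.sandwich_span key 1 h1span
      simpa using this
    · intro P hP ha heP
      have huP : u ∈ P := by
        have : u = (e + u) - e := by noncomm_ring
        rw [this]; exact P.sub_mem ha heP
      have : TwoSidedIdeal.span ({u} : Set R) ≤ P :=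
        TSI.span_le (by simpa using huP)
      rw [hu] at this
      exact hP.1 (le_antisymm le_top this)
  · rintro ⟨e, hJ, h1, h2⟩
    refine ⟨e, a - e, by noncomm_ring, ?_, hJ⟩
    by_contra hfull
    have h1nm : (1 : R) ∉ TwoSidedIdeal.span ({a - e} : Set R) := by
      intro h
      exact hfull (TSI.eq_top_of_one_mem h)
    obtain ⟨P, hP, hle⟩ := TSI.exists_le_maximal _ h1nm
    have huP : a - e ∈ P := hle (TwoSidedIdeal.subset_span (Set.mem_singleton _))
    by_cases heP : e ∈ P
    · have haP : a ∈ P := by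
        have : a = (a - e) + e := by noncomm_ring
        rw [this]; exact P.add_mem huP heP
      exact h2 P hP haP heP
    · -- e ∉ P: then 1 - e ∈ P
      have htop : P ⊔ TwoSidedIdeal.span {e} = ⊤ := by
        refine hP.2 _ (lt_of_le_of_ne le_sup_left ?_)
        intro h
        exact heP (h ▸ TwoSidedIdeal.mem_sup_right (TwoSidedIdeal.subset_span (Set.mem_singleton e)))
      have h1mem : (1 : R) ∈ P ⊔ TwoSidedIdeal.span {e} := htop ▸ TwoSidedIdeal.mem_top _
      obtain ⟨p, hp, t, ht, hpt⟩ := TwoSidedIdeal.mem_sup.mp h1mem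
      have key : ∀ x y : R, 1 * (x * e * y) * (1 - e) ∈ P := by
        intro x y
        have : e * y * (1 - e) ∈ P := TSI.jac_le_max hP (hJ y)
        have heq : 1 * (x * e * y) * (1 - e) = x * (e * y * (1 - e)) := by noncomm_ring
        rw [heq]
        exact P.mul_mem_left _ _ this
      have ht' : 1 * t * (1 - e) ∈ P := TSI.sandwich_span key t ht
      have h1e : (1 : R) - e ∈ P := by
        have heq : (1 : R) - e = p * (1 - e) + 1 * t * (1 - e) := by
          rw [show p = 1 - t by rw [← hpt]; noncomm_ring]; noncomm_ring
        rw [heq]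
        exact P.add_mem (P.mul_mem_right _ _ hp) ht'
      have ha1 : a - 1 ∈ P := by
        have : a - 1 = (a - e) - (1 - e) := by noncomm_ring
        rw [this]; exact P.sub_mem huP h1e
      have heP' : e ∈ P := h1 P hP ha1
      exact heP heP'
end

section
/- A ring R is feckly clean if and only if for any two distinct maximal ideals M and N of R, there exists an element e ∈ R such that e ∈ M, 1-e ∈ N and eR(1-e) ⊆ J(R). -/
section JacAux
variable {R : Type*} [Ring R]

lemma injac_zero : InJac (0 : R) := (Ideal.jacobson ⊥).zero_mem

lemma injac_add {x y : R} (hx : InJac x) (hy : InJac y) : InJac (x + y) :=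
  (Ideal.jacobson ⊥).add_mem hx hy

lemma injac_left (r : R) {x : R} (hx : InJac x) : InJac (r * x) := by
  simpa [smul_eq_mul, InJac] using (Ideal.jacobson (⊥ : Ideal R)).smul_mem r hx

lemma injac_mem_left_max {x : R} (hx : InJac x) {L : Ideal R} (hL : L.IsMaximal) : x ∈ L := by
  have hx' : x ∈ sInf { J : Ideal R | (⊥ : Ideal R) ≤ J ∧ J.IsMaximal } := hx
  exact Ideal.mem_sInf.mp hx' ⟨bot_le, hL⟩

lemma injac_left_inv {x : R} (hx : InJac x) : ∃ v : R, v * (1 - x) = 1 := by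
  by_contra h
  push_neg at h
  have h1 : (Ideal.span {1 - x} : Ideal R) ≠ ⊤ := by
    intro ht
    have h2 : (1 : R) ∈ Ideal.span ({1 - x} : Set R) := ht ▸ Submodule.mem_top
    rw [Ideal.span, Submodule.mem_span_singleton] at h2
    obtain ⟨a, ha⟩ := h2
    exact h a (by simpa [smul_eq_mul] using ha)
  obtain ⟨L, hL, hle⟩ := Ideal.exists_le_maximal _ h1
  have hxL : x ∈ L := injac_mem_left_max hx hL
  have h1x : (1 : R) - x ∈ L := hle (Ideal.subset_span (Set.mem_singleton _))
  have : (1 : R) ∈ L := by simpa using L.add_mem hxL h1x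
  exact hL.ne_top ((Ideal.eq_top_iff_one L).mpr this)

lemma injac_right {x : R} (y : R) (hx : InJac x) : InJac (x * y) := by
  show x * y ∈ sInf { J : Ideal R | (⊥ : Ideal R) ≤ J ∧ J.IsMaximal }
  rw [Ideal.mem_sInf]
  rintro L ⟨-, hL⟩
  by_contra hxyL
  have hsup : L ⊔ Ideal.span {x * y} = ⊤ := by
    refine hL.out.2 _ (lt_of_le_of_ne le_sup_left fun heq => hxyL ?_)
    exact heq ▸ Submodule.mem_sup_right (Ideal.subset_span (Set.mem_singleton _))
  have h1 : (1 : R) ∈ L ⊔ Ideal.span {x * y} := hsup ▸ Submodule.mem_top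
  obtain ⟨l, hl, z, hz, hlz⟩ := Submodule.mem_sup.mp h1
  rw [Ideal.span, Submodule.mem_span_singleton] at hz
  obtain ⟨r, rfl⟩ := hz
  have hrx : InJac (r * x) := injac_left r hx
  have hyrx : InJac (y * (r * x)) := injac_left y hrx
  obtain ⟨v, hv⟩ := injac_left_inv hyrx
  set w : R := 1 + (r * x) * v * y with hw
  have key : w * (1 - (r * x) * y) = 1 := by
    calc w * (1 - (r * x) * y)
        = 1 - (r * x) * y + (r * x) * (v * (1 - y * (r * x))) * y := by rw [hw]; noncomm_ring
      _ = 1 := by rw [hv]; noncomm_ring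
  have hlval : l = 1 - (r * x) * y := by
    have : l + r * (x * y) = 1 := by simpa [smul_eq_mul] using hlz
    rw [← this]; noncomm_ring
  have hone : (1 : R) ∈ L := by
    have := L.smul_mem w hl
    rwa [smul_eq_mul, hlval, key] at this
  exact hL.ne_top ((Ideal.eq_top_iff_one L).mpr hone)

end JacAux

section TwoSidedAux
open TwoSidedIdeal
variable {R : Type*} [Ring R]

lemma span_mono' {s t : Set R} (h : s ⊆ t) : span s ≤ span t :=
  fun _ hx => mem_span_iff.mp hx _ (h.trans subset_span)

lemma span_le_of_subset {s : Set R} {I : TwoSidedIdeal R} (h : s ⊆ I) : span s ≤ I :=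
  fun _ hx => mem_span_iff.mp hx _ h

/-- The Jacobson radical as a two-sided ideal. -/
def jacT (R : Type*) [Ring R] : TwoSidedIdeal R :=
  TwoSidedIdeal.mk' {x : R | InJac x} ((Ideal.jacobson (⊥ : Ideal R)).zero_mem)
    (fun hx hy => (Ideal.jacobson (⊥ : Ideal R)).add_mem hx hy)
    (fun {x} hx => (Ideal.jacobson (⊥ : Ideal R)).neg_mem hx)
    (fun hy => injac_left _ hy) (fun hx => injac_right _ hx)

lemma mem_jacT {x : R} : x ∈ jacT R ↔ InJac x := by
  unfold jacT; exact TwoSidedIdeal.mem_mk' ..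

/-- decomposition 1 = m + t with t ∈ span {x}, for x ∉ M, M maximal. -/
lemma max_decomp {M : TwoSidedIdeal R} (hM : IsMaxTwoSided M) {x : R} (hx : x ∉ M) :
    ∃ m ∈ M, ∃ t ∈ span ({x} : Set R), m + t = 1 := by
  have hsup : M ⊔ span {x} = ⊤ := by
    refine hM.2 _ (lt_of_le_of_ne le_sup_left fun heq => hx ?_)
    exact heq ▸ mem_sup_right (subset_span (Set.mem_singleton _))
  exact mem_sup.mp ((TwoSidedIdeal.one_mem_iff _).mpr hsup)

/-- Jacobson radical is contained in every maximal two-sided ideal. -/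
lemma injac_mem_max {M : TwoSidedIdeal R} (hM : IsMaxTwoSided M) {x : R} (hx : InJac x) :
    x ∈ M := by
  by_contra h
  obtain ⟨m, hm, t, ht, hmt⟩ := max_decomp hM h
  have htJ : InJac t := mem_jacT.mp (span_le_of_subset (by simpa [Set.singleton_subset_iff, mem_jacT] using hx) ht)
  obtain ⟨v, hv⟩ := injac_left_inv htJ
  have hm' : m = 1 - t := by rw [← hmt]; abel
  have hone : (1 : R) ∈ M := by
    have := M.mul_mem_left v m hm
    rwa [hm', hv] at this
  exact hM.1 (TwoSidedIdeal.one_mem_iff M |>.mp hone)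

/-- Dichotomy: if e·r·(1−e) ∈ M for all r and M is maximal, then e ∈ M or 1−e ∈ M. -/
lemma dichotomy {M : TwoSidedIdeal R} (hM : IsMaxTwoSided M) {e : R}
    (he : ∀ r : R, e * r * (1 - e) ∈ M) : e ∈ M ∨ (1 : R) - e ∈ M := by
  by_cases h : (1 : R) - e ∈ M
  · exact Or.inr h
  left
  obtain ⟨m, hm, t, ht, hmt⟩ := max_decomp hM h
  set T : TwoSidedIdeal R := TwoSidedIdeal.mk' {x : R | ∀ r : R, e * r * x ∈ M}
    (fun r => by simpa using M.zero_mem)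
    (fun {x y} hx hy r => by rw [mul_add]; exact M.add_mem (hx r) (hy r))
    (fun {x} hx r => by rw [← mul_neg_one, ← mul_assoc]; exact M.mul_mem_right _ _ (hx r))
    (fun {x y} hy r => by rw [show e * r * (x * y) = e * (r * x) * y by noncomm_ring]; exact hy (r * x))
    (fun {x y} hx r => by rw [← mul_assoc]; exact M.mul_mem_right _ _ (hx r)) with hT
  have htT : ∀ r : R, e * r * t ∈ M := by
    have : t ∈ T := span_le_of_subset (by
      intro z hz
      rw [Set.mem_singleton_iff] at hz
      subst hz
      rw [SetLike.mem_coe, hT, TwoSidedIdeal.mem_mk']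
      exact he) ht
    rwa [hT, TwoSidedIdeal.mem_mk'] at this
  have he2 : e = e * m + e * 1 * t := by rw [mul_one, ← mul_add, hmt, mul_one]
  rw [he2]
  exact M.add_mem (M.mul_mem_left _ _ hm) (htT 1)

/-- Every proper two-sided ideal lies in a maximal one. -/
lemma exists_max_above {I : TwoSidedIdeal R} (hI : I ≠ ⊤) :
    ∃ M : TwoSidedIdeal R, IsMaxTwoSided M ∧ I ≤ M := by
  obtain ⟨M, hIM, hMs, hMmax⟩ := zorn_le_nonempty₀ {J : TwoSidedIdeal R | J ≠ ⊤ ∧ I ≤ J}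
    (fun c hcs hchain y hy => by
      refine ⟨TwoSidedIdeal.mk' (⋃ J ∈ c, (J : Set R))
        ?_ ?_ ?_ ?_ ?_, ⟨?_, ?_⟩, ?_⟩
      · exact Set.mem_biUnion hy (y.zero_mem)
      · rintro x z hx hz
        simp only [Set.mem_iUnion, SetLike.mem_coe] at hx hz ⊢
        obtain ⟨J₁, hJ₁, hx⟩ := hx
        obtain ⟨J₂, hJ₂, hz⟩ := hz
        rcases hchain.total hJ₁ hJ₂ with h | h
        · exact ⟨J₂, hJ₂, J₂.add_mem (h hx) hz⟩
        · exact ⟨J₁, hJ₁, J₁.add_mem hx (h hz)⟩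
      · rintro x hx
        simp only [Set.mem_iUnion, SetLike.mem_coe] at hx ⊢
        obtain ⟨J, hJ, hx⟩ := hx
        exact ⟨J, hJ, J.neg_mem hx⟩
      · rintro x z hz
        simp only [Set.mem_iUnion, SetLike.mem_coe] at hz ⊢
        obtain ⟨J, hJ, hz⟩ := hz
        exact ⟨J, hJ, J.mul_mem_left _ _ hz⟩
      · rintro x z hx
        simp only [Set.mem_iUnion, SetLike.mem_coe] at hx ⊢
        obtain ⟨J, hJ, hx⟩ := hx
        exact ⟨J, hJ, J.mul_mem_right _ _ hx⟩
      · -- properness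
        intro htop
        have h1 := (TwoSidedIdeal.one_mem_iff _).mpr htop
        rw [TwoSidedIdeal.mem_mk'] at h1
        simp only [Set.mem_iUnion, SetLike.mem_coe] at h1
        obtain ⟨J, hJ, h1⟩ := h1
        exact (hcs hJ).1 ((TwoSidedIdeal.one_mem_iff J).mp h1)
      · -- I ≤ union
        refine le_trans (hcs hy).2 ?_
        intro x hx
        rw [TwoSidedIdeal.mem_mk']
        exact Set.mem_biUnion hy hx
      · -- upper bound
        intro J hJ x hx
        rw [TwoSidedIdeal.mem_mk']
        exact Set.mem_biUnion hJ hx)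
    I ⟨hI, le_refl I⟩
  refine ⟨M, ⟨hMs.1, fun Q hQ => ?_⟩, hMs.2⟩
  by_contra hQt
  exact absurd (hMmax ⟨hQt, hMs.2.trans hQ.le⟩ hQ.le) (not_le_of_gt hQ)

/-- Finite character of span. -/
lemma one_mem_span_finset {S : Set R} (h : (1 : R) ∈ span S) :
    ∃ F : Finset R, ↑F ⊆ S ∧ (1 : R) ∈ span (F : Set R) := by
  classical
  set D : TwoSidedIdeal R := TwoSidedIdeal.mk'
    {x : R | ∃ F : Finset R, ↑F ⊆ S ∧ x ∈ span (F : Set R)}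
    ⟨∅, by simp, (span _).zero_mem⟩
    (fun {x y} hx hy => by
      obtain ⟨F₁, hF₁, hx⟩ := hx
      obtain ⟨F₂, hF₂, hy⟩ := hy
      refine ⟨F₁ ∪ F₂, by rw [Finset.coe_union]; exact Set.union_subset hF₁ hF₂, ?_⟩
      exact (span _).add_mem
        (span_mono' (by rw [Finset.coe_union]; exact Set.subset_union_left) hx)
        (span_mono' (by rw [Finset.coe_union]; exact Set.subset_union_right) hy))
    (fun {x} hx => by
      obtain ⟨F, hF, hx⟩ := hx
      exact ⟨F, hF, (span _).neg_mem hx⟩)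
    (fun {x y} hy => by
      obtain ⟨F, hF, hy⟩ := hy
      exact ⟨F, hF, (span _).mul_mem_left _ _ hy⟩)
    (fun {x y} hx => by
      obtain ⟨F, hF, hx⟩ := hx
      exact ⟨F, hF, (span _).mul_mem_right _ _ hx⟩) with hD
  have hsub : S ⊆ D := by
    intro x hx
    rw [SetLike.mem_coe, hD, TwoSidedIdeal.mem_mk']
    exact ⟨{x}, by simpa using hx, subset_span (by simp)⟩
  have := mem_span_iff.mp h D hsub
  rwa [hD, TwoSidedIdeal.mem_mk'] at this

lemma full_notMem {u : R} (hu : IsFullElem u) {M : TwoSidedIdeal R} (hM : IsMaxTwoSided M) :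
    u ∉ M := by
  intro h
  exact hM.1 (top_le_iff.mp (hu ▸ span_le_of_subset (Set.singleton_subset_iff.mpr h)))

lemma full_of_notMem_max {u : R} (h : ∀ M : TwoSidedIdeal R, IsMaxTwoSided M → u ∉ M) :
    IsFullElem u := by
  by_contra hu
  obtain ⟨M, hM, hle⟩ := exists_max_above hu
  exact h M hM (hle (subset_span (Set.mem_singleton u)))

end TwoSidedAux


section SCAux
open TwoSidedIdeal
variable {R : Type*} [Ring R]

/-- "semicentral mod Jacobson" elements -/
def SC (e : R) : Prop := ∀ r : R, InJac (e * r * (1 - e))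

lemma injac_zero' : InJac (0 : R) := (Ideal.jacobson (⊥ : Ideal R)).zero_mem

lemma injac_add' {x y : R} (hx : InJac x) (hy : InJac y) : InJac (x + y) :=
  (Ideal.jacobson (⊥ : Ideal R)).add_mem hx hy

lemma sc_zero : SC (0 : R) := fun r => by simpa using injac_zero'

lemma sc_one : SC (1 : R) := fun r => by simpa using injac_zero'

lemma sc_mul {x y : R} (hx : SC x) (hy : SC y) : SC (x * y) := fun r => by
  have key : x * y * r * (1 - x * y)
      = x * (y * r) * (1 - x) + x * (y * (r * x) * (1 - y)) := by noncomm_ring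
  rw [key]
  exact injac_add' (hx _) (injac_left x (hy _))

lemma sc_join {x y : R} (hx : SC x) (hy : SC y) : SC (x + y - x * y) := fun r => by
  have key : (x + y - x * y) * r * (1 - (x + y - x * y))
      = x * r * (1 - x) * (1 - y) + (1 - x) * (y * (r * (1 - x)) * (1 - y)) := by noncomm_ring
  rw [key]
  exact injac_add' (injac_right _ (hx r)) (injac_left _ (hy _))

def orL : List R → R := fun l => l.foldr (fun x y => x + y - x * y) 0

def andL : List R → R := fun l => l.foldr (· * ·) 1

lemma orL_cons (x : R) (t : List R) : orL (x :: t) = x + orL t - x * orL t := rfl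

lemma andL_cons (x : R) (t : List R) : andL (x :: t) = x * andL t := rfl

lemma sc_orL {l : List R} (h : ∀ x ∈ l, SC x) : SC (orL l) := by
  induction l with
  | nil => exact sc_zero
  | cons x t ih =>
    rw [orL_cons]
    exact sc_join (h x (List.mem_cons_self)) (ih fun y hy => h y (List.mem_cons_of_mem _ hy))

lemma sc_andL {l : List R} (h : ∀ x ∈ l, SC x) : SC (andL l) := by
  induction l with
  | nil => exact sc_one
  | cons x t ih =>
    rw [andL_cons]
    exact sc_mul (h x (List.mem_cons_self)) (ih fun y hy => h y (List.mem_cons_of_mem _ hy))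

lemma orL_mem {I : TwoSidedIdeal R} {l : List R} (h : ∀ x ∈ l, x ∈ I) : orL l ∈ I := by
  induction l with
  | nil => exact I.zero_mem
  | cons x t ih =>
    rw [orL_cons]
    have hx := h x (List.mem_cons_self)
    have ht := ih fun y hy => h y (List.mem_cons_of_mem _ hy)
    exact I.sub_mem (I.add_mem hx ht) (I.mul_mem_right _ _ hx)

lemma andL_mem {I : TwoSidedIdeal R} {l : List R} (h : ∃ x ∈ l, x ∈ I) : andL l ∈ I := by
  induction l with
  | nil => obtain ⟨x, hx, -⟩ := h; exact absurd hx (List.not_mem_nil)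
  | cons x t ih =>
    rw [andL_cons]
    obtain ⟨y, hy, hyI⟩ := h
    rcases List.mem_cons.mp hy with rfl | hyt
    · exact I.mul_mem_right _ _ hyI
    · exact I.mul_mem_left _ _ (ih ⟨y, hyt, hyI⟩)

lemma one_sub_orL_mem {I : TwoSidedIdeal R} {l : List R} (h : ∃ x ∈ l, 1 - x ∈ I) :
    1 - orL l ∈ I := by
  induction l with
  | nil => obtain ⟨x, hx, -⟩ := h; exact absurd hx (List.not_mem_nil)
  | cons x t ih =>
    have key : 1 - orL (x :: t) = (1 - x) * (1 - orL t) := by rw [orL_cons]; noncomm_ring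
    rw [key]
    obtain ⟨y, hy, h1y⟩ := h
    rcases List.mem_cons.mp hy with rfl | hyt
    · exact I.mul_mem_right _ _ h1y
    · exact I.mul_mem_left _ _ (ih ⟨y, hyt, h1y⟩)

lemma one_sub_andL_mem {I : TwoSidedIdeal R} {l : List R} (h : ∀ x ∈ l, 1 - x ∈ I) :
    1 - andL l ∈ I := by
  induction l with
  | nil => show (1 : R) - 1 ∈ I; rw [sub_self]; exact I.zero_mem
  | cons x t ih =>
    have key : 1 - andL (x :: t) = (1 - x) * andL t + (1 - andL t) := by
      rw [andL_cons]; noncomm_ring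
    rw [key]
    exact I.add_mem (I.mul_mem_right _ _ (h x (List.mem_cons_self)))
      (ih fun y hy => h y (List.mem_cons_of_mem _ hy))

end SCAux


open TwoSidedIdeal

theorem stmt6 {R : Type*} [Ring R] :
    FecklyCleanRing R ↔ ∀ M N : TwoSidedIdeal R, IsMaxTwoSided M → IsMaxTwoSided N → M ≠ N →
      ∃ e : R, e ∈ M ∧ 1 - e ∈ N ∧ ∀ r : R, InJac (e * r * (1 - e)) := by
  constructor
  · intro hF M N hM hN hne
    have hMN : M ⊔ N = ⊤ := by
      refine hM.2 _ (lt_of_le_of_ne le_sup_left fun heq => ?_)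
      have hNM : N ≤ M := le_sup_right.trans heq.ge
      rcases eq_or_lt_of_le hNM with h | h
      · exact hne h.symm
      · exact hM.1 (hN.2 M h)
    obtain ⟨m, hm, n, hn, hmn⟩ := mem_sup.mp ((one_mem_iff _).mpr hMN)
    obtain ⟨e, u, hae, hu, hsc⟩ := hF n
    have heM : e ∈ M := by
      rcases dichotomy hM (fun r => injac_mem_max hM (hsc r)) with h | h
      · exact h
      · exfalso
        apply full_notMem hu hM
        have h1 : u = (n - 1) + (1 - e) := by rw [hae]; abel
        have h2 : n - 1 = -m := by rw [← hmn]; abel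
        rw [h1, h2]
        exact M.add_mem (M.neg_mem hm) h
    have heN : (1 : R) - e ∈ N := by
      rcases dichotomy hN (fun r => injac_mem_max hN (hsc r)) with h | h
      · exfalso
        apply full_notMem hu hN
        have h1 : u = n - e := by rw [hae]; abel
        rw [h1]
        exact N.sub_mem hn h
      · exact h
    exact ⟨e, heM, heN, hsc⟩
  · intro H a
    classical
    have step1 : ∀ N : TwoSidedIdeal R, ∃ f : R, SC f ∧
        (∀ M : TwoSidedIdeal R, IsMaxTwoSided M → a ∈ M → 1 - f ∈ M) ∧
        (IsMaxTwoSided N → 1 - a ∈ N → f ∈ N) := by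
      intro N
      by_cases hN : IsMaxTwoSided N ∧ 1 - a ∈ N
      · obtain ⟨hNmax, hNa⟩ := hN
        have hch : ∀ M : TwoSidedIdeal R, ∃ x : R, x ∈ N ∧ SC x ∧
            (IsMaxTwoSided M → a ∈ M → 1 - x ∈ M) := by
          intro M
          by_cases hM : IsMaxTwoSided M ∧ a ∈ M
          · have hne : N ≠ M := by
              rintro rfl
              have h1 : (1 : R) ∈ N := by simpa using N.add_mem hNa hM.2
              exact hNmax.1 ((one_mem_iff N).mp h1)
            obtain ⟨x, hxN, hxM, hsc⟩ := H N M hNmax hM.1 hne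
            exact ⟨x, hxN, hsc, fun _ _ => hxM⟩
          · exact ⟨0, N.zero_mem, sc_zero, fun h1 h2 => absurd ⟨h1, h2⟩ hM⟩
        choose g hg using hch
        have hspan : span (insert a (Set.range g)) = ⊤ := by
          by_contra h
          obtain ⟨P, hP, hle⟩ := exists_max_above h
          have haP : a ∈ P := hle (subset_span (Set.mem_insert _ _))
          have hgP : g P ∈ P := hle (subset_span (Set.mem_insert_of_mem _ ⟨P, rfl⟩))
          have h1gP : 1 - g P ∈ P := (hg P).2.2 hP haP
          exact hP.1 ((one_mem_iff P).mp (by simpa using P.add_mem hgP h1gP))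
        obtain ⟨F, hFS, hF1⟩ := one_mem_span_finset ((one_mem_iff _).mpr hspan)
        set F' := F.erase a with hF'def
        have hmemN : ∀ x ∈ F', x ∈ N ∧ SC x := by
          intro x hx
          have hxF := Finset.mem_of_mem_erase hx
          have hxa := Finset.ne_of_mem_erase hx
          rcases Set.mem_insert_iff.mp (hFS hxF) with h | ⟨M', rfl⟩
          · exact absurd h hxa
          · exact ⟨(hg M').1, (hg M').2.1⟩
        refine ⟨orL F'.toList,
          sc_orL (fun x hx => (hmemN x (Finset.mem_toList.mp hx)).2), ?_,
          fun _ _ => orL_mem (fun x hx => (hmemN x (Finset.mem_toList.mp hx)).1)⟩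
        intro M hM haM
        apply one_sub_orL_mem
        have hex : ∃ x ∈ F', x ∉ M := by
          by_contra hc
          push_neg at hc
          have hFM : (↑F : Set R) ⊆ M := by
            intro x hxF
            by_cases hxa : x = a
            · exact hxa ▸ haM
            · exact hc x (Finset.mem_erase.mpr ⟨hxa, hxF⟩)
          exact hM.1 ((one_mem_iff M).mp (span_le_of_subset hFM hF1))
        obtain ⟨x, hxF', hxM⟩ := hex
        refine ⟨x, Finset.mem_toList.mpr hxF', ?_⟩
        rcases dichotomy hM (fun r => injac_mem_max hM ((hmemN x hxF').2 r)) with h | h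
        · exact absurd h hxM
        · exact h
      · refine ⟨1, sc_one, fun M _ _ => ?_, fun h1 h2 => absurd ⟨h1, h2⟩ hN⟩
        rw [sub_self]
        exact M.zero_mem
    choose f hf using step1
    have hspan2 : span (insert (1 - a) (Set.range fun N => 1 - f N)) = ⊤ := by
      by_contra h
      obtain ⟨P, hP, hle⟩ := exists_max_above h
      have h1aP : (1 : R) - a ∈ P := hle (subset_span (Set.mem_insert _ _))
      have h1fP : (1 : R) - f P ∈ P := hle (subset_span (Set.mem_insert_of_mem _ ⟨P, rfl⟩))
      have hfP : f P ∈ P := (hf P).2.2 hP h1aP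
      exact hP.1 ((one_mem_iff P).mp (by simpa using P.add_mem hfP h1fP))
    obtain ⟨F₂, hF₂S, hF₂1⟩ := one_mem_span_finset ((one_mem_iff _).mpr hspan2)
    set G := F₂.erase (1 - a) with hGdef
    have hGprop : ∀ x ∈ G, SC (1 - x) ∧ (∀ M, IsMaxTwoSided M → a ∈ M → x ∈ M) := by
      intro x hx
      have hxF := Finset.mem_of_mem_erase hx
      have hxa := Finset.ne_of_mem_erase hx
      rcases Set.mem_insert_iff.mp (hF₂S hxF) with h | ⟨N', rfl⟩
      · exact absurd h hxa
      · constructor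
        · rw [sub_sub_cancel]
          exact (hf N').1
        · intro M hM haM
          exact (hf N').2.1 M hM haM
    set e := andL (G.toList.map fun x => 1 - x) with hedef
    have hsce : SC e := by
      apply sc_andL
      intro y hy
      rw [List.mem_map] at hy
      obtain ⟨x, hx, rfl⟩ := hy
      exact (hGprop x (Finset.mem_toList.mp hx)).1
    have heA : ∀ M, IsMaxTwoSided M → a ∈ M → 1 - e ∈ M := by
      intro M hM haM
      apply one_sub_andL_mem
      intro y hy
      rw [List.mem_map] at hy
      obtain ⟨x, hx, rfl⟩ := hy
      rw [sub_sub_cancel]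
      exact (hGprop x (Finset.mem_toList.mp hx)).2 M hM haM
    have heB : ∀ N, IsMaxTwoSided N → 1 - a ∈ N → e ∈ N := by
      intro N hN h1aN
      apply andL_mem
      have hex : ∃ x ∈ G, x ∉ N := by
        by_contra hc
        push_neg at hc
        have hFM : (↑F₂ : Set R) ⊆ N := by
          intro x hxF
          by_cases hxa : x = 1 - a
          · exact hxa ▸ h1aN
          · exact hc x (Finset.mem_erase.mpr ⟨hxa, hxF⟩)
        exact hN.1 ((one_mem_iff N).mp (span_le_of_subset hFM hF₂1))
      obtain ⟨x, hxG, hxN⟩ := hex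
      refine ⟨1 - x, List.mem_map.mpr ⟨x, Finset.mem_toList.mpr hxG, rfl⟩, ?_⟩
      rcases dichotomy hN (fun r => injac_mem_max hN ((hGprop x hxG).1 r)) with h | h
      · exact h
      · rw [sub_sub_cancel] at h
        exact absurd h hxN
    refine ⟨e, a - e, by abel, ?_, hsce⟩
    apply full_of_notMem_max
    intro P hP hmem
    rcases dichotomy hP (fun r => injac_mem_max hP (hsce r)) with heP | h1eP
    · have haP : a ∉ P := by
        intro haP
        exact hP.1 ((one_mem_iff P).mp (by simpa using P.add_mem heP (heA P hP haP)))
      apply haP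
      have h3 : a = (a - e) + e := by abel
      rw [h3]
      exact P.add_mem hmem heP
    · have h1aP : (1 : R) - a ∉ P := by
        intro h1aP
        exact hP.1 ((one_mem_iff P).mp (by simpa using P.add_mem (heB P hP h1aP) h1eP))
      apply h1aP
      have h2 : (1 : R) - a = (1 - e) - (a - e) := by abel
      rw [h2]
      exact P.sub_mem h1eP hmem
end

section
/- If for every a ∈ R there exists an integer n ≥ 2 such that aⁿ - a ∈ J(R), then R is feckly clean. -/
section Aux

variable {R : Type*} [Ring R]

lemma injac_mul_right {x : R} (hx : InJac x) (y : R) : InJac (x * y) :=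
  Ideal.mul_mem_right y _ hx

lemma injac_mul_left {x : R} (hx : InJac x) (y : R) : InJac (y * x) :=
  Ideal.mul_mem_left _ y hx

lemma injac_sub {x y : R} (hx : InJac x) (hy : InJac y) : InJac (x - y) :=
  Ideal.sub_mem _ hx hy

lemma injac_neg {x : R} (hx : InJac x) : InJac (-x) := neg_mem hx

/-- If `x` is in the Jacobson radical, then `1 - x` has a left inverse. -/
lemma exists_left_inv_one_sub {x : R} (hx : InJac x) : ∃ z : R, z * (1 - x) = 1 := by
  obtain ⟨z, hz⟩ := Ideal.mem_jacobson_iff.1 hx (-1)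
  rw [Ideal.mem_bot] at hz
  refine ⟨z, ?_⟩
  have h1 : z * (1 - x) - 1 = z * -1 * x + z - 1 := by noncomm_ring
  exact sub_eq_zero.mp (h1.trans hz)

lemma full_of_left_inv {u c : R} (hc : c * u = 1) : IsFullElem u := by
  refine TwoSidedIdeal.one_mem_iff _ |>.mp ?_
  rw [← hc]
  exact TwoSidedIdeal.mul_mem_left _ c u (TwoSidedIdeal.subset_span rfl)

end Aux

theorem stmt14 {R : Type*} [Ring R]
    (h : ∀ a : R, ∃ n : ℕ, 2 ≤ n ∧ InJac (a ^ n - a)) :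
    FecklyCleanRing R := by
  intro a
  obtain ⟨n, hn2, hj⟩ := h a
  -- upgrade the exponent to one that is at least 3
  have hm : InJac (a ^ (2 * n - 1) - a) := by
    have key : a ^ (2 * n - 1) - a = a ^ (n - 1) * (a ^ n - a) + (a ^ n - a) := by
      have h1 : (n - 1) + n = 2 * n - 1 := by omega
      have h2 : (n - 1) + 1 = n := by omega
      rw [mul_sub, ← pow_add, h1, ← pow_succ, h2]
      abel
    rw [key]
    exact injac_add (injac_mul_left hj _) hj
  obtain ⟨k, hk⟩ : ∃ k, 2 * n - 1 = k + 3 := ⟨2 * n - 4, by omega⟩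
  rw [hk] at hm
  -- two polynomial identities, proved in ℤ[X] and transported to `R` via evaluation at `a`
  have key1 : (a ^ (k + 1) - 1 + a ^ (k + 2)) * (a - 1 + a ^ (k + 2)) - 1 =
      (a ^ (k + 3) - a) + a ^ k * (a ^ (k + 3) - a) + a ^ (k + 1) * (a ^ (k + 3) - a) := by
    have hp : ((Polynomial.X : Polynomial ℤ) ^ (k + 1) - 1 + Polynomial.X ^ (k + 2)) *
          (Polynomial.X - 1 + Polynomial.X ^ (k + 2)) - 1 =
        (Polynomial.X ^ (k + 3) - Polynomial.X) +
          Polynomial.X ^ k * (Polynomial.X ^ (k + 3) - Polynomial.X) +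
          Polynomial.X ^ (k + 1) * (Polynomial.X ^ (k + 3) - Polynomial.X) := by ring
    have := congrArg (Polynomial.aeval a : Polynomial ℤ →ₐ[ℤ] R) hp
    simpa [map_mul, map_sub, map_add, map_pow, map_one] using this
  have key2 : a ^ (k + 2) * a ^ (k + 2) - a ^ (k + 2) =
      a ^ (k + 1) * (a ^ (k + 3) - a) := by
    have h1 : (k + 2) + (k + 2) = (k + 1) + (k + 3) := by omega
    have h2 : (k + 1) + 1 = k + 2 := by omega
    rw [mul_sub, ← pow_add, ← pow_add, h1, ← pow_succ, h2]
  -- the decomposition : a = (1 - a^(k+2)) + (a - 1 + a^(k+2))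
  refine ⟨1 - a ^ (k + 2), a - 1 + a ^ (k + 2), by abel, ?_, ?_⟩
  · -- fullness: `a - 1 + a^(k+2)` has a left inverse
    have hvu : InJac ((a ^ (k + 1) - 1 + a ^ (k + 2)) * (a - 1 + a ^ (k + 2)) - 1) := by
      rw [key1]
      exact injac_add (injac_add hm (injac_mul_left hm _)) (injac_mul_left hm _)
    obtain ⟨z, hz⟩ := exists_left_inv_one_sub (injac_neg hvu)
    rw [sub_neg_eq_add] at hz
    have h1 : (1 : R) + ((a ^ (k + 1) - 1 + a ^ (k + 2)) * (a - 1 + a ^ (k + 2)) - 1) =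
        (a ^ (k + 1) - 1 + a ^ (k + 2)) * (a - 1 + a ^ (k + 2)) := by abel
    rw [h1] at hz
    exact full_of_left_inv (c := z * (a ^ (k + 1) - 1 + a ^ (k + 2)))
      (by rw [mul_assoc]; exact hz)
  · -- the "feckly" condition
    intro r
    rw [sub_sub_cancel]
    set e : R := a ^ (k + 2) with he
    set x : R := (1 - e) * r * e with hx
    have hxx : InJac (x * x) := by
      have key : x * x = -(((1 - e) * r) * ((a ^ (k + 1) * (a ^ (k + 3) - a)) * (r * e))) := by
        rw [← key2, hx]; noncomm_ring
      rw [key]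
      exact injac_neg (injac_mul_left (injac_mul_right (injac_mul_left hm _) _) _)
    obtain ⟨p, hp2, hxp⟩ := h x
    obtain ⟨q, rfl⟩ : ∃ q, p = q + 2 := ⟨p - 2, by omega⟩
    have hxpow : InJac (x ^ (q + 2)) := by
      have hq : x ^ (q + 2) = x ^ q * (x * x) := by rw [pow_add, pow_two]
      rw [hq]
      exact injac_mul_left hxx _
    have hfin : x = x ^ (q + 2) - (x ^ (q + 2) - x) := by rw [sub_sub_cancel]
    rw [hfin]
    exact injac_sub hxpow hxp
end
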